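/- Let v : (Fin n → ℝ≥0) → ℝ be a nonnegative SOS valuation, let s be a signal profile, fix agent i, and for A ⊆ [n] \ {i} write v(s_A, 0_B, s_i) for the profile where agents in A keep their signals, agents in B = ([n]\{i})\A have signal 0, and i keeps s_i. Then for any 1 ≤ a ≤ n-2: (1/(a·C(n-1,a))) · ∑_{A : |A|=a} v(s_A, 0_B, s_i) ≥ (1/((a+1)·C(n-1,a+1))) · ∑_{A : |A|=a+1} v(s_A, 0_B, s_i). -/

import Mathlib

def SOS {n : ℕ} (v : (Fin n → NNReal) → ℝ) : Prop :=
  ∀ (i : Fin n) (s s' : Fin n → NNReal) (t : NNReal), s ≤ s' → s' i = s i → s i ≤ t →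
    v (Function.update s' i t) - v s' ≤ v (Function.update s i t) - v s

/-- The profile which agrees with `s` on `A ∪ {i}` and is `0` elsewhere. -/
def zeroOutside {n : ℕ} (s : Fin n → NNReal) (i : Fin n) (A : Finset (Fin n)) :
    Fin n → NNReal :=
  fun j => if j = i ∨ j ∈ A then s j else 0

open Finset

lemma zo_mono {n : ℕ} (s : Fin n → NNReal) (i : Fin n) {A A' : Finset (Fin n)}
    (h : A ⊆ A') : zeroOutside s i A ≤ zeroOutside s i A' := by
  intro j
  unfold zeroOutside
  by_cases hj : j = i ∨ j ∈ A
  · rw [if_pos hj, if_pos (hj.imp_right fun h' => h h')]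
  · rw [if_neg hj]; exact zero_le

lemma zo_update {n : ℕ} (s : Fin n → NNReal) (i : Fin n) (A : Finset (Fin n))
    (j : Fin n) :
    Function.update (zeroOutside s i A) j (s j) = zeroOutside s i (insert j A) := by
  funext k
  by_cases hk : k = j
  · subst hk; simp [zeroOutside]
  · rw [Function.update_of_ne hk]
    simp only [zeroOutside, Finset.mem_insert]
    have h' : (k = i ∨ k ∈ A) ↔ (k = i ∨ k = j ∨ k ∈ A) := by tauto
    exact if_congr h' rfl rfl

lemma zo_key {n : ℕ} (v : (Fin n → NNReal) → ℝ) (hsos : SOS v)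
    (s : Fin n → NNReal) (i : Fin n) :
    ∀ A : Finset (Fin n), i ∉ A →
      ∑ j ∈ A, (v (zeroOutside s i A) - v (zeroOutside s i (A.erase j)))
        ≤ v (zeroOutside s i A) - v (zeroOutside s i ∅) := by
  intro A
  induction A using Finset.induction_on with
  | empty => simp
  | @insert x B hx ih =>
    intro hi
    have hiB : i ∉ B := fun h => hi (mem_insert_of_mem h)
    rw [Finset.sum_insert hx, Finset.erase_insert hx]
    have hstep : ∀ j ∈ B,
        v (zeroOutside s i (insert x B)) - v (zeroOutside s i ((insert x B).erase j))
          ≤ v (zeroOutside s i B) - v (zeroOutside s i (B.erase j)) := by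
      intro j hj
      have hjx : j ≠ x := fun h => hx (h ▸ hj)
      have hji : j ≠ i := fun h => hiB (h ▸ hj)
      rw [Finset.erase_insert_of_ne (Ne.symm hjx)]
      have h1 : zeroOutside s i (B.erase j) ≤ zeroOutside s i (insert x (B.erase j)) :=
        zo_mono s i (subset_insert _ _)
      have h2 : zeroOutside s i (insert x (B.erase j)) j = zeroOutside s i (B.erase j) j := by
        simp [zeroOutside, hji, hjx, Finset.mem_insert, Finset.mem_erase]
      have h3 : zeroOutside s i (B.erase j) j ≤ s j := by
        simp [zeroOutside, hji, Finset.mem_erase]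
      have hS := hsos j _ _ (s j) h1 h2 h3
      rw [zo_update, zo_update, Finset.insert_erase hj] at hS
      have hcomm : insert j (insert x (B.erase j)) = insert x B := by
        rw [Finset.insert_comm, Finset.insert_erase hj]
      rw [hcomm] at hS
      exact hS
    have hsum := le_trans (Finset.sum_le_sum hstep) (ih hiB)
    linarith

theorem stmt_4 {n : ℕ} (v : (Fin n → NNReal) → ℝ)
    (hnonneg : ∀ s, 0 ≤ v s) (hmono : Monotone v) (hsos : SOS v)
    (s : Fin n → NNReal) (i : Fin n) (a : ℕ) (ha1 : 1 ≤ a) (ha2 : a ≤ n - 2) :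
    (1 / ((a : ℝ) * (Nat.choose (n - 1) a : ℝ))) *
        ∑ A ∈ (Finset.univ.erase i).powersetCard a, v (zeroOutside s i A) ≥
      (1 / (((a : ℝ) + 1) * (Nat.choose (n - 1) (a + 1) : ℝ))) *
        ∑ A ∈ (Finset.univ.erase i).powersetCard (a + 1), v (zeroOutside s i A) := by
  have hn3 : 3 ≤ n := by omega
  set T : Finset (Fin n) := Finset.univ.erase i with hT
  have hcardT : T.card = n - 1 := by
    rw [hT, Finset.card_erase_of_mem (mem_univ i), Finset.card_univ, Fintype.card_fin]
  -- per-A inequality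
  have hperA : ∀ A ∈ T.powersetCard (a + 1),
      (a : ℝ) * v (zeroOutside s i A) ≤ ∑ j ∈ A, v (zeroOutside s i (A.erase j)) := by
    intro A hA
    rw [Finset.mem_powersetCard] at hA
    have hiA : i ∉ A := fun h => (Finset.mem_erase.mp (hA.1 h)).1 rfl
    have hk := zo_key v hsos s i A hiA
    rw [Finset.sum_sub_distrib, Finset.sum_const, nsmul_eq_mul, hA.2] at hk
    have h0 := hnonneg (zeroOutside s i ∅)
    push_cast at hk
    linarith
  -- sum swap
  have hswap : ∑ A ∈ T.powersetCard (a + 1), ∑ j ∈ A, v (zeroOutside s i (A.erase j))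
      = ∑ B ∈ T.powersetCard a, ∑ _j ∈ T \ B, v (zeroOutside s i B) := by
    rw [Finset.sum_sigma', Finset.sum_sigma']
    refine Finset.sum_nbij' (fun p => ⟨p.1.erase p.2, p.2⟩)
      (fun p => ⟨insert p.2 p.1, p.2⟩) ?_ ?_ ?_ ?_ ?_
    · rintro ⟨A, j⟩ hp
      simp only [Finset.mem_sigma, Finset.mem_powersetCard] at hp ⊢
      obtain ⟨⟨hAT, hAc⟩, hj⟩ := hp
      refine ⟨⟨(Finset.erase_subset _ _).trans hAT, ?_⟩, ?_⟩
      · rw [Finset.card_erase_of_mem hj, hAc]; omega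
      · exact Finset.mem_sdiff.mpr ⟨hAT hj, Finset.notMem_erase _ _⟩
    · rintro ⟨B, j⟩ hp
      simp only [Finset.mem_sigma, Finset.mem_powersetCard, Finset.mem_sdiff] at hp ⊢
      obtain ⟨⟨hBT, hBc⟩, hjT, hjB⟩ := hp
      refine ⟨⟨Finset.insert_subset hjT hBT, ?_⟩, Finset.mem_insert_self _ _⟩
      rw [Finset.card_insert_of_notMem hjB, hBc]
    · rintro ⟨A, j⟩ hp
      simp only [Finset.mem_sigma, Finset.mem_powersetCard] at hp
      simp [Finset.insert_erase hp.2]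
    · rintro ⟨B, j⟩ hp
      simp only [Finset.mem_sigma, Finset.mem_powersetCard, Finset.mem_sdiff] at hp
      simp [Finset.erase_insert hp.2.2]
    · rintro ⟨A, j⟩ _
      rfl
  -- main counting inequality
  have hmain : (a : ℝ) * ∑ A ∈ T.powersetCard (a + 1), v (zeroOutside s i A)
      ≤ ((n - 1 - a : ℕ) : ℝ) * ∑ B ∈ T.powersetCard a, v (zeroOutside s i B) := by
    rw [Finset.mul_sum, Finset.mul_sum]
    calc ∑ A ∈ T.powersetCard (a + 1), (a : ℝ) * v (zeroOutside s i A)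
        ≤ ∑ A ∈ T.powersetCard (a + 1), ∑ j ∈ A, v (zeroOutside s i (A.erase j)) :=
          Finset.sum_le_sum hperA
      _ = ∑ B ∈ T.powersetCard a, ∑ _j ∈ T \ B, v (zeroOutside s i B) := hswap
      _ = ∑ B ∈ T.powersetCard a, ((n - 1 - a : ℕ) : ℝ) * v (zeroOutside s i B) := by
          apply Finset.sum_congr rfl
          intro B hB
          rw [Finset.mem_powersetCard] at hB
          rw [Finset.sum_const, Finset.card_sdiff_of_subset hB.1, hcardT, hB.2, nsmul_eq_mul]
  -- nonnegativity of sums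
  have hS0 : 0 ≤ ∑ B ∈ T.powersetCard a, v (zeroOutside s i B) :=
    Finset.sum_nonneg fun B _ => hnonneg _
  -- positivity
  have han1 : a ≤ n - 1 := by omega
  have hc : (0 : ℝ) < (Nat.choose (n - 1) a : ℝ) := by
    exact_mod_cast Nat.choose_pos han1
  have hsub1 : 1 ≤ n - 1 - a := by omega
  have hsubpos : (0 : ℝ) < ((n - 1 - a : ℕ) : ℝ) := by exact_mod_cast hsub1
  have hapos : (0 : ℝ) < (a : ℝ) := by exact_mod_cast ha1
  -- choose identity
  have hid : ((a : ℝ) + 1) * (Nat.choose (n - 1) (a + 1) : ℝ)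
      = ((n - 1 - a : ℕ) : ℝ) * (Nat.choose (n - 1) a : ℝ) := by
    have h := Nat.choose_succ_right_eq (n - 1) a
    have h' : (Nat.choose (n - 1) (a + 1) : ℝ) * ((a : ℝ) + 1)
        = (Nat.choose (n - 1) a : ℝ) * ((n - 1 - a : ℕ) : ℝ) := by exact_mod_cast h
    linarith
  rw [ge_iff_le, hid]
  rw [one_div, one_div, ← div_eq_inv_mul, ← div_eq_inv_mul,
    div_le_div_iff₀ (by positivity) (by positivity)]
  nlinarith [hmain, hc]
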